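/- Let ℓ ≥ 1. The number of elements g ∈ GU₂(𝔬_ℓ) with g² = I equals (q − 1)·q^{2ℓ−1} + 2. -/

import Mathlib

set_option linter.unusedSectionVars false
set_option maxHeartbeats 1000000

open IsLocalRing


open Matrix

/-- The antidiagonal permutation matrix `W`. -/
def Wmat (OO : Type) [CommRing OO] : Matrix (Fin 2) (Fin 2) OO := !![0, 1; 1, 0]

lemma Wmat_det_isUnit (OO : Type) [CommRing OO] : IsUnit (Wmat OO).det := by
  have : (Wmat OO).det = -1 := by simp [Wmat, Matrix.det_fin_two_of]
  rw [this]; exact isUnit_one.neg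

/-- `A* = W (A°)ᵀ W⁻¹`, where `°` is applied entrywise. -/
noncomputable def mstar {OO : Type} [CommRing OO] (c : OO →+* OO)
    (M : Matrix (Fin 2) (Fin 2) OO) : Matrix (Fin 2) (Fin 2) OO :=
  Wmat OO * (M.map c)ᵀ * (Wmat OO)⁻¹

lemma mstar_mul {OO : Type} [CommRing OO] (c : OO →+* OO)
    (M N : Matrix (Fin 2) (Fin 2) OO) :
    mstar c (M * N) = mstar c N * mstar c M := by
  unfold mstar
  rw [Matrix.map_mul, Matrix.transpose_mul]
  simp only [mul_assoc]
  rw [Matrix.nonsing_inv_mul_cancel_left _ _ (Wmat_det_isUnit OO)]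

lemma mstar_one {OO : Type} [CommRing OO] (c : OO →+* OO) :
    mstar c (1 : Matrix (Fin 2) (Fin 2) OO) = 1 := by
  unfold mstar
  rw [Matrix.map_one c c.map_zero c.map_one, Matrix.transpose_one, mul_one,
    Matrix.mul_nonsing_inv _ (Wmat_det_isUnit OO)]

lemma gu_one {OO : Type} [CommRing OO] (c : OO →+* OO) :
    mstar c ((1 : GL (Fin 2) OO) : Matrix (Fin 2) (Fin 2) OO) *
      ((1 : GL (Fin 2) OO) : Matrix (Fin 2) (Fin 2) OO) = 1 := by
  rw [Units.val_one, mstar_one, one_mul]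

lemma gu_mul {OO : Type} [CommRing OO] (c : OO →+* OO) (a b : GL (Fin 2) OO)
    (ha : mstar c ↑a * (↑a : Matrix (Fin 2) (Fin 2) OO) = 1)
    (hb : mstar c ↑b * (↑b : Matrix (Fin 2) (Fin 2) OO) = 1) :
    mstar c (↑(a * b)) * (↑(a * b) : Matrix (Fin 2) (Fin 2) OO) = 1 := by
  rw [Units.val_mul]
  rw [mstar_mul]
  rw [mul_assoc]
  rw [← mul_assoc (mstar c (↑a : Matrix (Fin 2) (Fin 2) OO))
    (↑a : Matrix (Fin 2) (Fin 2) OO) (↑b : Matrix (Fin 2) (Fin 2) OO)]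
  rw [ha, one_mul]
  exact hb

lemma gu_inv {OO : Type} [CommRing OO] (c : OO →+* OO) (a : GL (Fin 2) OO)
    (ha : mstar c ↑a * (↑a : Matrix (Fin 2) (Fin 2) OO) = 1) :
    mstar c (↑a⁻¹) * (↑a⁻¹ : Matrix (Fin 2) (Fin 2) OO) = 1 := by
  have h1 : mstar c (↑a : Matrix (Fin 2) (Fin 2) OO) = ↑a⁻¹ := by
    calc mstar c (↑a : Matrix (Fin 2) (Fin 2) OO)
        = mstar c (↑a : Matrix (Fin 2) (Fin 2) OO) *
            ((↑a : Matrix (Fin 2) (Fin 2) OO) * (↑a⁻¹ : Matrix (Fin 2) (Fin 2) OO)) := by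
          rw [a.mul_inv, mul_one]
      _ = mstar c (↑a : Matrix (Fin 2) (Fin 2) OO) * (↑a : Matrix (Fin 2) (Fin 2) OO) *
            (↑a⁻¹ : Matrix (Fin 2) (Fin 2) OO) := by rw [mul_assoc]
      _ = ↑a⁻¹ := by rw [ha, one_mul]
  calc mstar c (↑a⁻¹ : Matrix (Fin 2) (Fin 2) OO) * (↑a⁻¹ : Matrix (Fin 2) (Fin 2) OO)
      = mstar c (↑a⁻¹ : Matrix (Fin 2) (Fin 2) OO) *
          mstar c (↑a : Matrix (Fin 2) (Fin 2) OO) := by rw [h1]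
    _ = mstar c ((↑a : Matrix (Fin 2) (Fin 2) OO) * (↑a⁻¹ : Matrix (Fin 2) (Fin 2) OO)) :=
        (mstar_mul c _ _).symm
    _ = 1 := by rw [a.mul_inv, mstar_one]

/-- The unitary group `GU₂(𝔬_ℓ)` as a subgroup of `GL₂(𝔒_ℓ)`, with respect to the
entrywise involution `c`. -/
noncomputable def GU2 (OO : Type) [CommRing OO] (c : OO →+* OO) :
    Subgroup (GL (Fin 2) OO) where
  carrier := {A | mstar c (A : Matrix (Fin 2) (Fin 2) OO) * (A : Matrix (Fin 2) (Fin 2) OO) = 1}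
  one_mem' := gu_one c
  mul_mem' := fun ha hb => gu_mul c _ _ ha hb
  inv_mem' := fun ha => gu_inv c _ ha

section Aux
variable {O : Type} [CommRing O] [IsDomain O] [IsDiscreteValuationRing O]

/-- the residue map on `R = O ⧸ span{π}^ℓ` -/
noncomputable def resmap {π : O} (hπ : maximalIdeal O = Ideal.span {π}) {ℓ : ℕ} (hℓ : ℓ ≠ 0) :
    (O ⧸ Ideal.span {π} ^ ℓ) →+* ResidueField O :=
  Ideal.Quotient.lift _ (IsLocalRing.residue O) (by
    intro a ha
    have h1 : Ideal.span {π} ^ ℓ ≤ Ideal.span {π} := Ideal.pow_le_self hℓ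
    exact Ideal.Quotient.eq_zero_iff_mem.mpr (hπ ▸ h1 ha))

lemma resmap_mk {π : O} (hπ : maximalIdeal O = Ideal.span {π}) {ℓ : ℕ} (hℓ : ℓ ≠ 0) (x : O) :
    resmap hπ hℓ (Ideal.Quotient.mk _ x) = IsLocalRing.residue O x := rfl

lemma aux_isUnit_iff {π : O} (hπ : maximalIdeal O = Ideal.span {π}) {ℓ : ℕ} (hℓ : ℓ ≠ 0)
    (r : O ⧸ Ideal.span {π} ^ ℓ) :
    IsUnit r ↔ resmap hπ hℓ r ≠ 0 := by
  obtain ⟨x, rfl⟩ := Ideal.Quotient.mk_surjective r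
  constructor
  · intro h
    exact (h.map (resmap hπ hℓ)).ne_zero
  · intro h
    rw [resmap_mk] at h
    have hx : x ∉ maximalIdeal O := by
      intro hx
      exact h (Ideal.Quotient.eq_zero_iff_mem.mpr hx)
    exact (IsLocalRing.notMem_maximalIdeal.mp hx).map _

/-- multiplication by π as map `O/π^m → O/π^(m+1)` -/
noncomputable def mulPiMap (π : O) (m : ℕ) :
    (O ⧸ Ideal.span {π} ^ m) →ₗ[O] (O ⧸ Ideal.span {π} ^ (m + 1)) :=
  Submodule.mapQ _ _ (LinearMap.mulLeft O π) (by
    intro x hx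
    simp only [Submodule.mem_comap, LinearMap.mulLeft_apply]
    simp only [Ideal.span_singleton_pow, Ideal.mem_span_singleton] at hx ⊢
    rw [pow_succ']
    exact mul_dvd_mul_left π hx)

lemma mulPiMap_mk (π : O) (m : ℕ) (x : O) :
    mulPiMap π m (Ideal.Quotient.mk _ x) = Ideal.Quotient.mk _ (π * x) := rfl

lemma aux_card_nonunits {π : O} (hπ : maximalIdeal O = Ideal.span {π}) (m : ℕ) :
    Nat.card {r : O ⧸ Ideal.span {π} ^ (m + 1) // ¬ IsUnit r}
      = Nat.card (O ⧸ Ideal.span {π} ^ m) := by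
  have hπ0 : π ≠ 0 := by
    intro h
    exact IsDiscreteValuationRing.not_a_field O
      (by rw [hπ, h, Ideal.span_singleton_eq_bot])
  symm
  refine Nat.card_eq_of_bijective (fun a => ⟨mulPiMap π m a, ?_⟩) ⟨?_, ?_⟩
  · obtain ⟨x, rfl⟩ := Ideal.Quotient.mk_surjective a
    rw [mulPiMap_mk]
    rw [aux_isUnit_iff hπ (Nat.succ_ne_zero m), resmap_mk, not_not]
    refine Ideal.Quotient.eq_zero_iff_mem.mpr ?_
    rw [hπ]
    exact Ideal.mul_mem_right x _ (Ideal.mem_span_singleton_self π)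
  · intro a b hab
    obtain ⟨x, rfl⟩ := Ideal.Quotient.mk_surjective a
    obtain ⟨y, rfl⟩ := Ideal.Quotient.mk_surjective b
    simp only [Subtype.mk.injEq, mulPiMap_mk] at hab
    have := Ideal.Quotient.eq.mp hab
    rw [Ideal.span_singleton_pow, Ideal.mem_span_singleton] at this
    obtain ⟨t, ht⟩ := this
    rw [Ideal.Quotient.eq, Ideal.span_singleton_pow, Ideal.mem_span_singleton]
    refine ⟨t, mul_left_cancel₀ hπ0 ?_⟩
    rw [← mul_sub] at ht
    rw [ht, pow_succ', mul_assoc]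
  · rintro ⟨r, hr⟩
    obtain ⟨x, rfl⟩ := Ideal.Quotient.mk_surjective r
    rw [aux_isUnit_iff hπ (Nat.succ_ne_zero m), resmap_mk, not_not] at hr
    have : x ∈ maximalIdeal O := Ideal.Quotient.eq_zero_iff_mem.mp hr
    rw [hπ, Ideal.mem_span_singleton] at this
    obtain ⟨t, rfl⟩ := this
    exact ⟨Ideal.Quotient.mk _ t, Subtype.ext (mulPiMap_mk π m t)⟩

end Aux

section AuxB
variable {O : Type} [CommRing O] [IsDomain O] [IsDiscreteValuationRing O]
  [Finite (IsLocalRing.ResidueField O)]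

lemma aux_card_quot_pow {π : O} (hπ : maximalIdeal O = Ideal.span {π}) (k : ℕ) :
    Nat.card (O ⧸ Ideal.span {π} ^ k) = Nat.card (ResidueField O) ^ k := by
  have hmax : (Ideal.span {π}).IsMaximal := hπ ▸ IsLocalRing.maximalIdeal.isMaximal O
  have hprime : (Ideal.span {π}).IsPrime := hmax.isPrime
  have hbot : Ideal.span {π} ≠ ⊥ := hπ ▸ IsDiscreteValuationRing.not_a_field O
  have := cardQuot_pow_of_prime (S := O) (P := Ideal.span {π}) hbot (i := k)
  rw [Submodule.cardQuot_apply, Submodule.cardQuot_apply] at this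
  rw [this]
  congr 1
  unfold ResidueField
  rw [hπ]

lemma aux_finite_quot {π : O} (hπ : maximalIdeal O = Ideal.span {π}) (k : ℕ) :
    Finite (O ⧸ Ideal.span {π} ^ k) := by
  refine Nat.finite_of_card_ne_zero ?_
  rw [aux_card_quot_pow hπ k]
  exact pow_ne_zero _ Nat.card_pos.ne'

end AuxB


section AuxAlg
variable {OO : Type} [CommRing OO]

lemma Wmat_inv : (Wmat OO)⁻¹ = Wmat OO := by
  refine Matrix.inv_eq_right_inv ?_
  ext i j
  fin_cases i <;> fin_cases j <;>
    simp [Wmat, Matrix.mul_apply, Fin.sum_univ_two, Matrix.one_apply]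

lemma mstar_apply (c : OO →+* OO) (M : Matrix (Fin 2) (Fin 2) OO) :
    mstar c M = !![c (M 1 1), c (M 0 1); c (M 1 0), c (M 0 0)] := by
  unfold mstar
  rw [Wmat_inv]
  ext i j
  fin_cases i <;> fin_cases j <;>
    simp [Wmat, Matrix.mul_apply, Matrix.vecMul, dotProduct,
      Fin.sum_univ_two, Matrix.map_apply]

lemma aux_card_gu (c : OO →+* OO)
    (GU2 : Subgroup (GL (Fin 2) OO))
    (hGU2 : ∀ A : GL (Fin 2) OO, A ∈ GU2 ↔
      mstar c (A : Matrix (Fin 2) (Fin 2) OO) * (A : Matrix (Fin 2) (Fin 2) OO) = 1) :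
    Nat.card {g : ↥GU2 // g ^ 2 = 1}
      = Nat.card {M : Matrix (Fin 2) (Fin 2) OO // mstar c M * M = 1 ∧ M * M = 1} := by
  refine Nat.card_eq_of_bijective
    (fun g => ⟨((g.1 : GL (Fin 2) OO) : Matrix (Fin 2) (Fin 2) OO),
      (hGU2 _).mp g.1.2, ?_⟩) ⟨?_, ?_⟩
  · have := congrArg
      (fun h : ↥GU2 => ((h : GL (Fin 2) OO) : Matrix (Fin 2) (Fin 2) OO)) g.2
    simpa [pow_two, Units.val_mul] using this
  · rintro ⟨g₁, hg₁⟩ ⟨g₂, hg₂⟩ h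
    simp only [Subtype.mk.injEq] at h
    exact Subtype.ext (Subtype.ext (Units.ext h))
  · rintro ⟨M, h1, h2⟩
    refine ⟨⟨⟨⟨M, M, h2, h2⟩, (hGU2 _).mpr h1⟩, ?_⟩, rfl⟩
    apply Subtype.ext
    apply Units.ext
    show ((((⟨⟨M, M, h2, h2⟩, _⟩ : ↥GU2) ^ 2 : ↥GU2) : GL (Fin 2) OO) :
      Matrix (Fin 2) (Fin 2) OO) = _
    rw [SubmonoidClass.coe_pow, Units.val_pow_eq_pow_val, pow_two]
    simp [h2]
end AuxAlg

section AuxMain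
variable {OO : Type} [CommRing OO] {Rb : Type} [CommRing Rb] [Algebra Rb OO]

lemma aux_card_matrix_set (ε : OO) (uR : Rb)
    (hε2 : ε ^ 2 = algebraMap Rb OO uR)
    (hbasis : ∀ z : OO, ∃! xy : Rb × Rb,
      z = algebraMap Rb OO xy.1 + algebraMap Rb OO xy.2 * ε)
    (cj : OO ≃ₐ[Rb] OO) (hcj : cj ε = -ε)
    (h2 : IsUnit (2 : Rb)) :
    Nat.card {M : Matrix (Fin 2) (Fin 2) OO //
        mstar (cj : OO →+* OO) M * M = 1 ∧ M * M = 1}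
      = Nat.card {p : Rb × Rb × Rb × Rb // p.1 * p.2.1 = 0 ∧ p.1 * p.2.2.1 = 0 ∧
          p.1 * p.2.2.2 = 0 ∧ p.1 ^ 2 + uR * p.2.1 ^ 2 + p.2.2.1 * p.2.2.2 = 1} := by
  symm
  have hf : ∀ r : Rb, (cj : OO →+* OO) (algebraMap Rb OO r) = algebraMap Rb OO r :=
    fun r => cj.commutes r
  have hfc : ∀ z : OO, (cj : OO →+* OO) z = cj z := fun z => rfl
  have hcje : (cj : OO →+* OO) ε = -ε := hcj
  set f := algebraMap Rb OO with hfdef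
  have coords : ∀ {r s r' s' : Rb}, f r + f s * ε = f r' + f s' * ε → r = r' ∧ s = s' := by
    intro r s r' s' h
    have h1 := (hbasis (f r + f s * ε)).unique (y₁ := (r, s)) (y₂ := (r', s')) rfl h
    exact ⟨congrArg Prod.fst h1, congrArg Prod.snd h1⟩
  have finj : ∀ {r r' : Rb}, f r = f r' → r = r' := by
    intro r r' h
    have : f r + f 0 * ε = f r' + f 0 * ε := by rw [h]
    exact (coords this).1
  have half : ∀ {t : Rb}, t + t = 0 → t = 0 := by
    intro t ht
    have : (2 : Rb) * t = (2 : Rb) * 0 := by rw [mul_zero]; linear_combination ht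
    exact h2.mul_left_cancel this
  -- the matrix associated to a quadruple
  have keystar : ∀ x y b c : Rb,
      mstar (cj : OO →+* OO) !![f x + f y * ε, f b; f c, f x - f y * ε]
        = !![f x + f y * ε, f b; f c, f x - f y * ε] := by
    intro x y b c
    rw [mstar_apply]
    have e1 : (cj : OO →+* OO) (f x - f y * ε) = f x + f y * ε := by
      rw [map_sub, _root_.map_mul, hcje, hf, hf]; ring
    have e2 : (cj : OO →+* OO) (f x + f y * ε) = f x - f y * ε := by
      rw [map_add, _root_.map_mul, hcje, hf, hf]; ring
    have e3 : (cj : OO →+* OO) (f b) = f b := hf b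
    have e4 : (cj : OO →+* OO) (f c) = f c := hf c
    ext i j
    fin_cases i <;> fin_cases j <;>
      simp only [Matrix.cons_val', Matrix.cons_val_zero, Matrix.cons_val_one,
        Matrix.head_cons, Matrix.head_fin_const, Matrix.empty_val',
        Matrix.cons_val_fin_one, Matrix.of_apply, Fin.isValue] <;>
      [exact e1; exact e3; exact e4; exact e2]
  have keysq : ∀ x y b c : Rb, x * y = 0 → x * b = 0 → x * c = 0 →
      x ^ 2 + uR * y ^ 2 + b * c = 1 →
      !![f x + f y * ε, f b; f c, f x - f y * ε] *
        !![f x + f y * ε, f b; f c, f x - f y * ε] = 1 := by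
    intro x y b c h1 h2' h3 h4
    have E1 : f x * f y = 0 := by simpa using congrArg f h1
    have E2 : f x * f b = 0 := by simpa using congrArg f h2'
    have E3 : f x * f c = 0 := by simpa using congrArg f h3
    have E4 : f x ^ 2 + f uR * f y ^ 2 + f b * f c = 1 := by simpa using congrArg f h4
    ext i j
    fin_cases i <;> fin_cases j <;>
      simp [Matrix.mul_apply, Fin.sum_univ_two, Matrix.one_apply]
    · linear_combination E4 + f y ^ 2 * hε2 + 2 * ε * E1
    · linear_combination 2 * E2
    · linear_combination 2 * E3
    · linear_combination E4 + f y ^ 2 * hε2 - 2 * ε * E1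
  refine Nat.card_eq_of_bijective (fun p =>
    ⟨!![f p.1.1 + f p.1.2.1 * ε, f p.1.2.2.1;
        f p.1.2.2.2, f p.1.1 - f p.1.2.1 * ε], ?_, ?_⟩) ⟨?_, ?_⟩
  · rw [keystar]
    exact keysq _ _ _ _ p.2.1 p.2.2.1 p.2.2.2.1 p.2.2.2.2
  · exact keysq _ _ _ _ p.2.1 p.2.2.1 p.2.2.2.1 p.2.2.2.2
  · rintro ⟨⟨x, y, b, c⟩, hp⟩ ⟨⟨x', y', b', c'⟩, hq⟩ h
    simp only [Subtype.mk.injEq] at h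
    have hij := Matrix.ext_iff.mpr h
    have h00 : f x + f y * ε = f x' + f y' * ε := by simpa using hij 0 0
    have h01 : f b = f b' := by simpa using hij 0 1
    have h10 : f c = f c' := by simpa using hij 1 0
    obtain ⟨hx, hy⟩ := coords h00
    apply Subtype.ext
    simp only [Prod.mk.injEq]
    exact ⟨hx, hy, finj h01, finj h10⟩
  · rintro ⟨M, hstar, hsq⟩
    have hMst : mstar (cj : OO →+* OO) M = M := by
      calc mstar (cj : OO →+* OO) M = mstar (cj : OO →+* OO) M * (M * M) := by
            rw [hsq, mul_one]
        _ = (mstar (cj : OO →+* OO) M * M) * M := by rw [mul_assoc]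
        _ = M := by rw [hstar, one_mul]
    obtain ⟨⟨x, y⟩, ha, -⟩ := hbasis (M 0 0)
    obtain ⟨⟨b1, b2⟩, hb, -⟩ := hbasis (M 0 1)
    obtain ⟨⟨c1, c2⟩, hc, -⟩ := hbasis (M 1 0)
    obtain ⟨⟨d1, d2⟩, hd, -⟩ := hbasis (M 1 1)
    simp only at ha hb hc hd
    have hijst := Matrix.ext_iff.mpr (hMst.symm)
    rw [mstar_apply] at hijst
    -- b is fixed by cj
    have eb : f b1 + f b2 * ε = f b1 + f (-b2) * ε := by
      have := hijst 0 1
      simp only [Matrix.cons_val', Matrix.cons_val_zero, Matrix.cons_val_one,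
        Matrix.head_cons, Matrix.head_fin_const, Matrix.empty_val',
        Matrix.cons_val_fin_one, Matrix.of_apply, Fin.isValue] at this
      rw [hb] at this
      rw [hfc, map_add, _root_.map_mul, hcj] at this
      rw [show cj (f b1) = f b1 from cj.commutes b1,
        show cj (f b2) = f b2 from cj.commutes b2] at this
      rw [map_neg]
      linear_combination this
    have hb2 : b2 = 0 := by
      have := (coords eb).2
      exact half (by linear_combination this)
    have ec : f c1 + f c2 * ε = f c1 + f (-c2) * ε := by
      have := hijst 1 0
      simp only [Matrix.cons_val', Matrix.cons_val_zero, Matrix.cons_val_one,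
        Matrix.head_cons, Matrix.head_fin_const, Matrix.empty_val',
        Matrix.cons_val_fin_one, Matrix.of_apply, Fin.isValue] at this
      rw [hc] at this
      rw [hfc, map_add, _root_.map_mul, hcj] at this
      rw [show cj (f c1) = f c1 from cj.commutes c1,
        show cj (f c2) = f c2 from cj.commutes c2] at this
      rw [map_neg]
      linear_combination this
    have hc2 : c2 = 0 := by
      have := (coords ec).2
      exact half (by linear_combination this)
    -- d = cj a
    have ed : f d1 + f d2 * ε = f x + f (-y) * ε := by
      have := hijst 1 1
      simp only [Matrix.cons_val', Matrix.cons_val_zero, Matrix.cons_val_one,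
        Matrix.head_cons, Matrix.head_fin_const, Matrix.empty_val',
        Matrix.cons_val_fin_one, Matrix.of_apply, Fin.isValue] at this
      rw [hd] at this
      rw [ha] at this
      rw [hfc, map_add, _root_.map_mul, hcj] at this
      rw [show cj (f x) = f x from cj.commutes x,
        show cj (f y) = f y from cj.commutes y] at this
      rw [map_neg]
      linear_combination this
    obtain ⟨hd1, hd2⟩ := coords ed
    -- the defining equations from M * M = 1
    have hb' : M 0 1 = f b1 := by rw [hb, hb2, map_zero, zero_mul, add_zero]
    have hc' : M 1 0 = f c1 := by rw [hc, hc2, map_zero, zero_mul, add_zero]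
    have hd' : M 1 1 = f x - f y * ε := by
      rw [hd, hd1, hd2, map_neg]; ring
    have hsqij := Matrix.ext_iff.mpr hsq
    have Q00 : (f x + f y * ε) * (f x + f y * ε) + f b1 * f c1 = 1 := by
      have := hsqij 0 0
      rw [Matrix.mul_apply] at this
      rw [Fin.sum_univ_two] at this
      rw [ha, hb', hc'] at this
      simpa [Matrix.one_apply] using this
    have Q01 : (f x + f y * ε) * f b1 + f b1 * (f x - f y * ε) = 0 := by
      have := hsqij 0 1
      rw [Matrix.mul_apply] at this
      rw [Fin.sum_univ_two] at this
      rw [ha, hb', hd'] at this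
      simpa [Matrix.one_apply] using this
    have Q10 : f c1 * (f x + f y * ε) + (f x - f y * ε) * f c1 = 0 := by
      have := hsqij 1 0
      rw [Matrix.mul_apply] at this
      rw [Fin.sum_univ_two] at this
      rw [ha, hc', hd'] at this
      simpa [Matrix.one_apply] using this
    -- convert to Rb-level equations
    have K1 : f (x ^ 2 + uR * y ^ 2 + b1 * c1) + f (x * y + x * y) * ε
        = f 1 + f 0 * ε := by
      simp only [map_add, _root_.map_mul, _root_.map_pow, _root_.map_one, map_zero]
      linear_combination Q00 - f y ^ 2 * hε2
    obtain ⟨e4, e1'⟩ := coords K1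
    have e1 : x * y = 0 := half e1'
    have K2 : f (x * b1 + x * b1) + f 0 * ε = f 0 + f 0 * ε := by
      simp only [map_add, _root_.map_mul, map_zero]
      linear_combination Q01
    have e2 : x * b1 = 0 := half (coords K2).1
    have K3 : f (x * c1 + x * c1) + f 0 * ε = f 0 + f 0 * ε := by
      simp only [map_add, _root_.map_mul, map_zero]
      linear_combination Q10
    have e3 : x * c1 = 0 := half (coords K3).1
    refine ⟨⟨(x, y, b1, c1), e1, e2, e3, e4⟩, ?_⟩
    apply Subtype.ext
    show !![f x + f y * ε, f b1; f c1, f x - f y * ε] = M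
    rw [Matrix.eta_fin_two M, ha, hb', hc', hd']

end AuxMain


section Aux2
variable {R : Type} [CommRing R] {K : Type} [Field K]

lemma aux_sq_one (φ : R →+* K) (hφ : ∀ r : R, IsUnit r ↔ φ r ≠ 0)
    (h2 : IsUnit (2 : R)) {x : R} (hx : x ^ 2 = 1) : x = 1 ∨ x = -1 := by
  have key : (x - 1) * (x + 1) = 0 * (x + 1) := by rw [zero_mul]; linear_combination hx
  by_cases h : φ (x - 1) = 0
  · left
    have h1 : φ (x + 1) ≠ 0 := by
      have he : φ (x + 1) = φ (x - 1) + φ 2 := by rw [← map_add]; ring_nf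
      rw [he, h, zero_add]
      exact (hφ 2).mp h2
    have hu : IsUnit (x + 1) := (hφ _).mpr h1
    exact sub_eq_zero.mp (hu.mul_right_cancel key)
  · right
    have hu : IsUnit (x - 1) := (hφ _).mpr h
    have key2 : (x - 1) * (x + 1) = (x - 1) * 0 := by rw [mul_zero]; linear_combination hx
    exact eq_neg_of_add_eq_zero_left (hu.mul_left_cancel key2)

lemma aux_card_conic [Finite R] (φ : R →+* K) (hφ : ∀ r : R, IsUnit r ↔ φ r ≠ 0)
    (w : R) (hw : ∀ y : R, IsUnit (1 - w * y ^ 2)) :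
    Nat.card {p : R × R × R // w * p.1 ^ 2 + p.2.1 * p.2.2 = 1}
      = Nat.card R * Nat.card Rˣ := by
  symm
  rw [← Nat.card_prod]
  refine Nat.card_eq_of_bijective
    (fun yb => ⟨(yb.1, (yb.2 : R), (yb.2⁻¹ : Rˣ) * (1 - w * yb.1 ^ 2)), ?_⟩) ⟨?_, ?_⟩
  · have : (yb.2 : R) * ((yb.2⁻¹ : Rˣ) * (1 - w * yb.1 ^ 2)) = 1 - w * yb.1 ^ 2 := by
      rw [← mul_assoc, Units.mul_inv, one_mul]
    simp only [this]
    ring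
  · rintro ⟨y, b⟩ ⟨y', b'⟩ h
    simp only [Subtype.mk.injEq, Prod.mk.injEq] at h
    obtain ⟨h1, h2, -⟩ := h
    exact Prod.ext h1 (Units.ext h2)
  · rintro ⟨⟨y, b, c⟩, h⟩
    have hbc : b * c = 1 - w * y ^ 2 := by linear_combination h
    have hb : IsUnit b := isUnit_of_mul_isUnit_left (hbc ▸ hw y)
    refine ⟨(y, hb.unit), Subtype.ext ?_⟩
    simp only [Prod.mk.injEq, IsUnit.unit_spec]
    refine ⟨trivial, trivial, ?_⟩
    calc ((hb.unit⁻¹ : Rˣ) : R) * (1 - w * y ^ 2)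
        = ((hb.unit⁻¹ : Rˣ) : R) * (b * c) := by rw [hbc]
      _ = (((hb.unit⁻¹ : Rˣ) : R) * b) * c := by rw [mul_assoc]
      _ = c := by rw [IsUnit.val_inv_mul, one_mul]

lemma aux_card_T [Finite R] (φ : R →+* K) (hφ : ∀ r : R, IsUnit r ↔ φ r ≠ 0)
    (h2 : IsUnit (2 : R)) (w : R) (hw : ∀ y : R, IsUnit (1 - w * y ^ 2)) :
    Nat.card {p : R × R × R × R // p.1 * p.2.1 = 0 ∧ p.1 * p.2.2.1 = 0 ∧
        p.1 * p.2.2.2 = 0 ∧ p.1 ^ 2 + w * p.2.1 ^ 2 + p.2.2.1 * p.2.2.2 = 1}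
      = Nat.card R * Nat.card Rˣ + 2 := by
  have h2K : φ 2 ≠ 0 := (hφ 2).mp h2
  have hone : (1 : R) ≠ 0 := by
    intro h
    exact one_ne_zero ((map_one φ) ▸ (map_zero φ) ▸ congrArg φ h)
  have hneg : (-1 : R) ≠ 0 := fun h => hone (neg_eq_zero.mp h)
  have h1n : (1 : R) ≠ -1 := by
    intro h
    apply h2K
    have e : (2 : R) = 0 := by linear_combination h
    rw [e, map_zero]
  symm
  rw [show Nat.card R * Nat.card Rˣ + 2
      = Nat.card ({p : R × R × R // w * p.1 ^ 2 + p.2.1 * p.2.2 = 1} ⊕ (Unit ⊕ Unit)) by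
    have hB : Nat.card (Unit ⊕ Unit) = 2 := by simp [Nat.card_eq_fintype_card]
    rw [Nat.card_sum, aux_card_conic φ hφ w hw, hB]]
  refine Nat.card_eq_of_bijective (fun z => ?_) ⟨?_, ?_⟩
  · refine z.elim (fun p => ⟨(0, p.1.1, p.1.2.1, p.1.2.2), ?_⟩)
      (fun s => s.elim (fun _ => ⟨(1, 0, 0, 0), ?_⟩) (fun _ => ⟨(-1, 0, 0, 0), ?_⟩))
    · refine ⟨by ring, by ring, by ring, ?_⟩
      have := p.2
      dsimp at this ⊢
      linear_combination this
    · exact ⟨by ring, by ring, by ring, by ring⟩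
    · exact ⟨by ring, by ring, by ring, by ring⟩
  · rintro (⟨⟨y, b, c⟩, hp⟩ | (⟨⟩ | ⟨⟩)) (⟨⟨y', b', c'⟩, hq⟩ | (⟨⟩ | ⟨⟩)) h <;>
      simp only [Sum.elim_inl, Sum.elim_inr, Subtype.mk.injEq, Prod.mk.injEq] at h
    · obtain ⟨-, e1, e2, e3⟩ := h
      simp [e1, e2, e3]
    · exact absurd h.1.symm hone
    · exact absurd h.1.symm hneg
    · exact absurd h.1 hone
    · rfl
    · exact absurd h.1 h1n
    · exact absurd h.1 hneg
    · exact absurd h.1.symm h1n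
    · rfl
  · rintro ⟨⟨x, y, b, c⟩, hxy, hxb, hxc, heq⟩
    by_cases hx0 : x = 0
    · refine ⟨Sum.inl ⟨(y, b, c), ?_⟩, ?_⟩
      · dsimp
        subst hx0
        linear_combination heq
      · apply Subtype.ext
        simp [hx0]
    · by_cases hφx : φ x = 0
      · exfalso
        have hy : φ y = 0 := by
          by_contra hy
          have : IsUnit y := (hφ y).mpr hy
          have : x = 0 := by
            have := congrArg (fun z => z * ((this.unit⁻¹ : Rˣ) : R)) hxy
            simpa [mul_assoc, IsUnit.mul_val_inv] using this
          exact hx0 this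
        have hb : φ b = 0 := by
          by_contra hb
          have : IsUnit b := (hφ b).mpr hb
          have : x = 0 := by
            have := congrArg (fun z => z * ((this.unit⁻¹ : Rˣ) : R)) hxb
            simpa [mul_assoc, IsUnit.mul_val_inv] using this
          exact hx0 this
        have : φ 1 = 0 := by
          rw [← heq]
          simp only [map_add, _root_.map_mul, _root_.map_pow, hφx, hy, hb]
          ring
        rw [_root_.map_one] at this
        exact one_ne_zero this
      · have hxu : IsUnit x := (hφ x).mpr hφx
        have hy : y = 0 := by
          have := congrArg (fun z => ((hxu.unit⁻¹ : Rˣ) : R) * z) hxy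
          simpa [← mul_assoc, IsUnit.val_inv_mul] using this
        have hb : b = 0 := by
          have := congrArg (fun z => ((hxu.unit⁻¹ : Rˣ) : R) * z) hxb
          simpa [← mul_assoc, IsUnit.val_inv_mul] using this
        have hc : c = 0 := by
          have := congrArg (fun z => ((hxu.unit⁻¹ : Rˣ) : R) * z) hxc
          simpa [← mul_assoc, IsUnit.val_inv_mul] using this
        have hx2 : x ^ 2 = 1 := by
          rw [hy, hb, hc] at heq
          linear_combination heq
        rcases aux_sq_one φ hφ h2 hx2 with h1 | h1
        · exact ⟨Sum.inr (Sum.inl ()), Subtype.ext (by simp [h1, hy, hb, hc])⟩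
        · exact ⟨Sum.inr (Sum.inr ()), Subtype.ext (by simp [h1, hy, hb, hc])⟩
end Aux2

section Glue
variable {O : Type} [CommRing O] [IsDomain O] [IsDiscreteValuationRing O]

lemma aux_two_ne_zero [Finite (IsLocalRing.ResidueField O)]
    (hodd : Odd (ringChar (IsLocalRing.ResidueField O))) :
    (2 : IsLocalRing.ResidueField O) ≠ 0 := by
  intro h
  have h2' : ((2 : ℕ) : IsLocalRing.ResidueField O) = 0 := by push_cast; exact h
  have hdvd : ringChar (IsLocalRing.ResidueField O) ∣ 2 := (ringChar.spec _ 2).mp h2'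
  rcases (Nat.dvd_prime Nat.prime_two).mp hdvd with h1 | h1
  · exact CharP.char_ne_one (IsLocalRing.ResidueField O) (ringChar _) h1
  · rw [h1] at hodd
    obtain ⟨k, hk⟩ := hodd
    omega

lemma aux_units_card {R : Type} [CommRing R] [Finite R] :
    Nat.card Rˣ = Nat.card {r : R // IsUnit r} := by
  refine Nat.card_congr (Equiv.ofBijective (fun v => ⟨(v : R), v.isUnit⟩) ⟨?_, ?_⟩)
  · intro v w h
    exact Units.ext (congrArg Subtype.val h)
  · rintro ⟨r, hr⟩
    exact ⟨hr.unit, Subtype.ext hr.unit_spec⟩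

lemma aux_card_split {R : Type} [CommRing R] [Finite R] :
    Nat.card {r : R // IsUnit r} + Nat.card {r : R // ¬ IsUnit r} = Nat.card R := by
  classical
  have := Nat.card_congr (Equiv.sumCompl (fun r : R => IsUnit r))
  rw [Nat.card_sum] at this
  exact this
end Glue

theorem count_involutions_GU2
    (O : Type) [CommRing O] [IsDomain O] [IsDiscreteValuationRing O]
    [IsAdicComplete (IsLocalRing.maximalIdeal O) O]
    (π : O) (hπ : IsLocalRing.maximalIdeal O = Ideal.span {π})
    [Finite (IsLocalRing.ResidueField O)]
    (hodd : Odd (ringChar (IsLocalRing.ResidueField O)))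
    (q : ℕ) (hq : Nat.card (IsLocalRing.ResidueField O) = q)
    (ℓ : ℕ) (hℓ : 1 ≤ ℓ)
    -- the unramified quadratic extension 𝔒_ℓ = 𝔬_ℓ[ε]
    (OO : Type) [CommRing OO] [Algebra (O ⧸ Ideal.span {π} ^ ℓ) OO]
    (ε : OO) (u : O) (hu : IsUnit u)
    (hnonsq : ¬ ∃ t : IsLocalRing.ResidueField O, t ^ 2 = IsLocalRing.residue O u)
    (hε2 : ε ^ 2 = algebraMap (O ⧸ Ideal.span {π} ^ ℓ) OO
      (Ideal.Quotient.mk (Ideal.span {π} ^ ℓ) u))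
    (hbasis : ∀ z : OO, ∃! xy : (O ⧸ Ideal.span {π} ^ ℓ) × (O ⧸ Ideal.span {π} ^ ℓ),
      z = algebraMap (O ⧸ Ideal.span {π} ^ ℓ) OO xy.1 +
        algebraMap (O ⧸ Ideal.span {π} ^ ℓ) OO xy.2 * ε)
    -- the Galois involution `x ↦ x°`
    (cj : OO ≃ₐ[O ⧸ Ideal.span {π} ^ ℓ] OO) (hcj : cj ε = -ε)
    :
    Nat.card {g : ↥(GU2 OO (cj : OO →+* OO)) // g ^ 2 = 1} =
      (q - 1) * q ^ (2 * ℓ - 1) + 2 := by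
  obtain ⟨m, rfl⟩ : ∃ m, ℓ = m + 1 := ⟨ℓ - 1, by omega⟩
  have hm1 : (m + 1) ≠ 0 := Nat.succ_ne_zero m
  have finR : Finite (O ⧸ Ideal.span {π} ^ (m + 1)) := aux_finite_quot hπ (m + 1)
  have hφ : ∀ r : O ⧸ Ideal.span {π} ^ (m + 1), IsUnit r ↔ resmap hπ hm1 r ≠ 0 :=
    fun r => aux_isUnit_iff hπ hm1 r
  have h2K := aux_two_ne_zero hodd
  have h2R : IsUnit (2 : O ⧸ Ideal.span {π} ^ (m + 1)) := by
    rw [hφ, _root_.map_ofNat]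
    exact h2K
  have hw : ∀ y : O ⧸ Ideal.span {π} ^ (m + 1),
      IsUnit (1 - (Ideal.Quotient.mk (Ideal.span {π} ^ (m + 1)) u) * y ^ 2) := by
    intro y
    rw [hφ]
    intro h0
    rw [map_sub, _root_.map_one, _root_.map_mul, _root_.map_pow, resmap_mk] at h0
    have hy : resmap hπ hm1 y ≠ 0 := by
      intro hy
      rw [hy] at h0
      simp at h0
    apply hnonsq
    refine ⟨(resmap hπ hm1 y)⁻¹, ?_⟩
    have hE : IsLocalRing.residue O u * resmap hπ hm1 y ^ 2 = 1 := by
      linear_combination -h0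
    field_simp
    linear_combination -hE
  rw [aux_card_gu (cj : OO →+* OO) (GU2 OO (cj : OO →+* OO)) (fun A => Iff.rfl)]
  rw [aux_card_matrix_set ε (Ideal.Quotient.mk (Ideal.span {π} ^ (m + 1)) u) hε2 hbasis
    cj hcj h2R]
  rw [aux_card_T (resmap hπ hm1) hφ h2R _ hw]
  have cardR : Nat.card (O ⧸ Ideal.span {π} ^ (m + 1)) = q ^ (m + 1) := by
    rw [aux_card_quot_pow hπ, hq]
  have cardNon : Nat.card {r : O ⧸ Ideal.span {π} ^ (m + 1) // ¬ IsUnit r} = q ^ m := by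
    rw [aux_card_nonunits hπ m, aux_card_quot_pow hπ, hq]
  have cardU : Nat.card (O ⧸ Ideal.span {π} ^ (m + 1))ˣ = q ^ (m + 1) - q ^ m := by
    have h := aux_card_split (R := O ⧸ Ideal.span {π} ^ (m + 1))
    rw [aux_units_card, cardNon] at *
    omega
  rw [cardR, cardU]
  have hq1 : 1 ≤ q := by
    rw [← hq]
    exact Nat.one_le_iff_ne_zero.mpr Nat.card_pos.ne'
  obtain ⟨r, rfl⟩ : ∃ r, q = r + 1 := ⟨q - 1, by omega⟩
  have e1 : (r + 1) ^ (m + 1) - (r + 1) ^ m = (r + 1) ^ m * r := by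
    rw [pow_succ, Nat.mul_succ, Nat.add_sub_cancel]
  have e2 : 2 * (m + 1) - 1 = (m + 1) + m := by omega
  have e3 : (r + 1) ^ ((m + 1) + m) = (r + 1) ^ (m + 1) * (r + 1) ^ m := pow_add _ _ _
  rw [e1, e2, e3, show r + 1 - 1 = r from rfl]
  ring
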